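/- Let G be an edge-colored complete graph containing no properly colored triangle. Then V(G) can be partitioned into nonempty parts V_1, …, V_p (p ≥ 2 when |V(G)| ≥ 2) such that all edges between any two fixed parts V_i and V_j receive a single common color, and at most two colors in total appear on edges between different parts (Gallai's theorem). -/

import Mathlib

namespace GallaiAux

universe u

variable {V : Type u}

/-- Adjacency: an edge whose color avoids both `e` and `d`. -/
def Adj (col : V → V → ℕ) (e d : ℕ) (x y : V) : Prop :=
  x ≠ y ∧ col x y ≠ e ∧ col x y ≠ d

/-- Reachability through edges avoiding colors `e`, `d`. -/
def Reach (col : V → V → ℕ) (e d : ℕ) : V → V → Prop :=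
  Relation.ReflTransGen (Adj col e d)

theorem adj_symm {col : V → V → ℕ} (hsym : ∀ u v, col u v = col v u) {e d : ℕ} :
    Symmetric (Adj col e d) := fun x y h =>
  ⟨h.1.symm, by rw [hsym y x]; exact h.2.1, by rw [hsym y x]; exact h.2.2⟩

theorem reach_symm {col : V → V → ℕ} (hsym : ∀ u v, col u v = col v u) {e d : ℕ} :
    Symmetric (Reach col e d) :=
  fun x y h => (@Relation.ReflTransGen.stdSymm _ _ ⟨adj_symm hsym⟩).symm x y h

theorem cross_col {col : V → V → ℕ} {e d : ℕ} {x y : V}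
    (h : ¬ Reach col e d x y) (hne : x ≠ y) : col x y = e ∨ col x y = d := by
  by_contra hc
  push_neg at hc
  exact h (Relation.ReflTransGen.single ⟨hne, hc.1, hc.2⟩)

theorem homog {col : V → V → ℕ} (hsym : ∀ u v, col u v = col v u)
    (hno : ¬ ∃ x y z : V, x ≠ y ∧ y ≠ z ∧ x ≠ z ∧
        col x y ≠ col y z ∧ col y z ≠ col x z ∧ col x y ≠ col x z)
    {e d : ℕ} {x y z : V} (hxy : Reach col e d x y) (hxz : ¬ Reach col e d x z) :
    col z x = col z y := by
  induction hxy with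
  | refl => rfl
  | @tail b c hxb hadj ih =>
    have hzb : z ≠ b := fun h => hxz (h ▸ hxb)
    have hzc : z ≠ c := fun h => hxz (h ▸ (hxb.tail hadj))
    have h1 : col z b = e ∨ col z b = d := by
      by_contra hc; push_neg at hc
      exact hxz (hxb.tail (adj_symm hsym ⟨hzb, hc.1, hc.2⟩))
    have h2 : col z c = e ∨ col z c = d := by
      by_contra hc; push_neg at hc
      exact hxz ((hxb.tail hadj).tail (adj_symm hsym ⟨hzc, hc.1, hc.2⟩))
    have hbc := hadj.2
    have hmain : col z b = col z c := by
      by_contra hcc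
      have hA : col z b ≠ col b c := fun h => by
        rcases h1 with h' | h'
        · exact hbc.1 (h.symm.trans h')
        · exact hbc.2 (h.symm.trans h')
      have hB : col b c ≠ col z c := fun h => by
        rcases h2 with h' | h'
        · exact hbc.1 (h.trans h')
        · exact hbc.2 (h.trans h')
      exact hno ⟨z, b, c, hzb, hadj.1, hzc, hA, hB, hcc⟩
    exact ih.trans hmain

theorem mono {col : V → V → ℕ} (hsym : ∀ u v, col u v = col v u)
    (hno : ¬ ∃ x y z : V, x ≠ y ∧ y ≠ z ∧ x ≠ z ∧
        col x y ≠ col y z ∧ col y z ≠ col x z ∧ col x y ≠ col x z)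
    {e d : ℕ} {u₀ v₀ u v : V}
    (h0 : ¬ Reach col e d u₀ v₀) (hu : Reach col e d u₀ u) (hv : Reach col e d v₀ v) :
    col u v = col u₀ v₀ := by
  have h1 : ¬ Reach col e d v₀ u := fun h => h0 (hu.trans (reach_symm hsym h))
  have h2 : col u v₀ = col u v := homog hsym hno hv h1
  have h3 : col v₀ u₀ = col v₀ u := homog hsym hno hu h0
  rw [← h2, hsym u v₀, ← h3, hsym v₀ u₀]

theorem reach_mem {col : V → V → ℕ} {e d : ℕ} {S : Set V}
    (hS : ∀ x ∈ S, ∀ y ∈ Sᶜ, col x y = e ∨ col x y = d)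
    {x y : V} (hx : x ∈ S) (h : Reach col e d x y) : y ∈ S := by
  induction h with
  | refl => exact hx
  | @tail b c hxb hadj ih =>
    by_contra hc
    rcases hS b ih c hc with h' | h'
    · exact hadj.2.1 h'
    · exact hadj.2.2 h'

/-- Main disconnection lemma: some pair of colors `e`, `d` disconnects the
graph of edges avoiding them. -/
theorem disc : ∀ (n : ℕ) (V : Type u) [Fintype V] (col : V → V → ℕ),
    (∀ u v, col u v = col v u) →
    (¬ ∃ x y z : V, x ≠ y ∧ y ≠ z ∧ x ≠ z ∧
        col x y ≠ col y z ∧ col y z ≠ col x z ∧ col x y ≠ col x z) →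
    2 ≤ Fintype.card V → Fintype.card V = n →
    ∃ e d : ℕ, ∃ S : Set V, S.Nonempty ∧ Sᶜ.Nonempty ∧
      ∀ x ∈ S, ∀ y ∈ Sᶜ, col x y = e ∨ col x y = d := by
  intro n
  induction n using Nat.strong_induction_on with
  | _ n ih =>
  intro V _ col hsym hno hcard hn
  classical
  rcases Nat.lt_or_ge n 3 with h3 | h3
  · -- base case : card V = 2
    have hc2 : Nat.card V = 2 := by rw [Nat.card_eq_fintype_card]; omega
    obtain ⟨x, y, hxy, hU⟩ := Nat.card_eq_two_iff.mp hc2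
    refine ⟨col x y, col x y, {x}, ⟨x, rfl⟩,
      ⟨y, fun h => hxy (Set.mem_singleton_iff.mp h).symm⟩, ?_⟩
    intro x' hx' y' hy'
    rw [show x' = x from hx']
    have hy2 : y' = x ∨ y' = y := by
      have : y' ∈ ({x, y} : Set V) := hU.symm ▸ Set.mem_univ y'
      simpa using this
    rcases hy2 with h | h
    · exact absurd h hy'
    · rw [h]; left; rfl
  · -- inductive step : card V = n ≥ 3
    have hpos : 0 < Fintype.card V := by omega
    obtain ⟨v⟩ : Nonempty V := Fintype.card_pos_iff.mp hpos
    let V' := {w : V // w ≠ v}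
    have hcard' : Fintype.card V' = n - 1 := by
      have h1 : Fintype.card {w : V // ¬ w = v} = Fintype.card V - Fintype.card {w : V // w = v} :=
        Fintype.card_subtype_compl _
      have h2 : Fintype.card {w : V // w = v} = 1 := Fintype.card_subtype_eq v
      have : Fintype.card V' = Fintype.card {w : V // ¬ w = v} := rfl
      omega
    let col' : V' → V' → ℕ := fun x y => col x.1 y.1
    have hsym' : ∀ u w : V', col' u w = col' w u := fun u w => hsym u.1 w.1
    have hno' : ¬ ∃ x y z : V', x ≠ y ∧ y ≠ z ∧ x ≠ z ∧
        col' x y ≠ col' y z ∧ col' y z ≠ col' x z ∧ col' x y ≠ col' x z := by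
      rintro ⟨x, y, z, h1, h2, h3, h4, h5, h6⟩
      exact hno ⟨x.1, y.1, z.1, Subtype.coe_ne_coe.mpr h1, Subtype.coe_ne_coe.mpr h2,
        Subtype.coe_ne_coe.mpr h3, h4, h5, h6⟩
    have h2' : 2 ≤ Fintype.card V' := by omega
    obtain ⟨a, b, S', hS1', hS2', hcl'⟩ :=
      ih (n - 1) (by omega) V' col' hsym' hno' h2' hcard'
    by_cases hall : ∀ w₀ : V', ∃ w : V', Reach col' a b w₀ w ∧
        (col v w.1 ≠ a ∧ col v w.1 ≠ b)
    · -- every component of V' contains an "exotic" vertex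
      obtain ⟨p₀, hp₀⟩ := hS1'
      obtain ⟨q₀, hq₀⟩ := hS2'
      have hpq : ¬ Reach col' a b p₀ q₀ := fun h => hq₀ (reach_mem hcl' hp₀ h)
      -- for any u there is an exotic vertex in a different component
      have hsep : ∀ u : V', ∃ u' : V', (col v u'.1 ≠ a ∧ col v u'.1 ≠ b) ∧
          ¬ Reach col' a b u u' := by
        intro u
        by_cases h : Reach col' a b u p₀
        · obtain ⟨u', hr, he⟩ := hall q₀
          exact ⟨u', he, fun hc =>
            hpq (((reach_symm hsym' h).trans hc).trans (reach_symm hsym' hr))⟩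
        · obtain ⟨u', hr, he⟩ := hall p₀
          exact ⟨u', he, fun hc => h (hc.trans (reach_symm hsym' hr))⟩
      -- exotic vertices in different components get the same color from v
      have hE1 : ∀ u u' : V', (col v u.1 ≠ a ∧ col v u.1 ≠ b) →
          (col v u'.1 ≠ a ∧ col v u'.1 ≠ b) →
          ¬ Reach col' a b u u' → col v u.1 = col v u'.1 := by
        intro u u' heu heu' hr
        by_contra hcc
        have hne : u ≠ u' := fun h => hr (h ▸ Relation.ReflTransGen.refl)
        have hcross := cross_col hr hne
        have hA : col v u.1 ≠ col u.1 u'.1 := fun h => by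
          rcases hcross with h' | h'
          · exact heu.1 (h.trans h')
          · exact heu.2 (h.trans h')
        have hB : col u.1 u'.1 ≠ col v u'.1 := fun h => by
          rcases hcross with h' | h'
          · exact heu'.1 (h.symm.trans h' : _)
          · exact heu'.2 (h.symm.trans h')
        exact hno ⟨v, u.1, u'.1, Ne.symm u.2, Subtype.coe_ne_coe.mpr hne, Ne.symm u'.2,
          hA, hB, hcc⟩
      obtain ⟨u₀, hu₀r, hu₀e⟩ := hall p₀
      -- all exotic vertices get the same color e from v
      have hC1 : ∀ u : V', (col v u.1 ≠ a ∧ col v u.1 ≠ b) → col v u.1 = col v u₀.1 := by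
        intro u heu
        by_cases h : Reach col' a b u₀ u
        · obtain ⟨u1, he1, hr1⟩ := hsep u₀
          have hr2 : ¬ Reach col' a b u u1 := fun hc => hr1 (h.trans hc)
          rw [hE1 u u1 heu he1 hr2, ← hE1 u₀ u1 hu₀e he1 hr1]
        · exact hE1 u u₀ heu hu₀e (fun hc => h (reach_symm hsym' hc))
      -- non-exotic vertex and exotic vertex in another component
      have hE2 : ∀ (w u : V'), ¬ (col v w.1 ≠ a ∧ col v w.1 ≠ b) →
          (col v u.1 ≠ a ∧ col v u.1 ≠ b) →
          ¬ Reach col' a b w u → col v w.1 = col w.1 u.1 := by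
        intro w u hw hu hr
        have hne : w ≠ u := fun h => hr (h ▸ Relation.ReflTransGen.refl)
        have hcross := cross_col hr hne
        have hw' : col v w.1 = a ∨ col v w.1 = b := by
          by_contra hc; push_neg at hc; exact hw hc
        by_contra hcc
        have hB : col w.1 u.1 ≠ col v u.1 := fun h => by
          rcases hcross with h' | h'
          · exact hu.1 (h.symm.trans h')
          · exact hu.2 (h.symm.trans h')
        have hC : col v w.1 ≠ col v u.1 := fun h => by
          rcases hw' with h' | h'
          · exact hu.1 (h ▸ h')
          · exact hu.2 (h ▸ h')
        exact hno ⟨v, w.1, u.1, Ne.symm w.2, Subtype.coe_ne_coe.mpr hne, Ne.symm u.2,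
          hcc, hB, hC⟩
      -- all non-exotic vertices get the same color from v
      have hE3 : ∀ w w' : V', ¬ (col v w.1 ≠ a ∧ col v w.1 ≠ b) →
          ¬ (col v w'.1 ≠ a ∧ col v w'.1 ≠ b) → col v w.1 = col v w'.1 := by
        intro w w' hw hw'
        by_cases hww : Reach col' a b w w'
        · obtain ⟨u1, hu1e, hu1r⟩ := hsep w
          have hr' : ¬ Reach col' a b w' u1 := fun hc => hu1r (hww.trans hc)
          rw [hE2 w u1 hw hu1e hu1r, hE2 w' u1 hw' hu1e hr']
          exact (mono hsym' hno' hu1r hww Relation.ReflTransGen.refl).symm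
        · obtain ⟨uA, hrA, heA⟩ := hall w
          obtain ⟨uB, hrB, heB⟩ := hall w'
          have h1 : ¬ Reach col' a b w uB := fun hc =>
            hww (hc.trans (reach_symm hsym' hrB))
          have h2 : ¬ Reach col' a b w' uA := fun hc =>
            hww (reach_symm hsym' (hc.trans (reach_symm hsym' hrA)))
          rw [hE2 w uB hw heB h1, hE2 w' uA hw' heA h2]
          have e1 : col' w uB = col' w w' :=
            mono hsym' hno' hww Relation.ReflTransGen.refl hrB
          have e2 : col' w' uA = col' w' w :=
            mono hsym' hno' (fun hc => hww (reach_symm hsym' hc))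
              Relation.ReflTransGen.refl hrA
          show col' w uB = col' w' uA
          rw [e1, e2, hsym' w w']
      -- now {v} is closed for the pair (e₀, d₀)
      by_cases hex : ∃ w : V', ¬ (col v w.1 ≠ a ∧ col v w.1 ≠ b)
      · obtain ⟨w₁, hw₁⟩ := hex
        refine ⟨col v u₀.1, col v w₁.1, {v}, ⟨v, rfl⟩, ⟨u₀.1, u₀.2⟩, ?_⟩
        intro x hx y hy
        have hyv : y ≠ v := hy
        rw [show x = v from hx]
        by_cases hE : col v y ≠ a ∧ col v y ≠ b
        · left; exact hC1 ⟨y, hyv⟩ hE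
        · right; exact hE3 ⟨y, hyv⟩ w₁ hE hw₁
      · push_neg at hex
        refine ⟨col v u₀.1, col v u₀.1, {v}, ⟨v, rfl⟩, ⟨u₀.1, u₀.2⟩, ?_⟩
        intro x hx y hy
        have hyv : y ≠ v := hy
        rw [show x = v from hx]
        left
        exact hC1 ⟨y, hyv⟩ (hex ⟨y, hyv⟩)
    · -- some component of V' has no exotic vertex: it is closed in V
      push_neg at hall
      obtain ⟨w₀, hw₀⟩ := hall
      refine ⟨a, b, {x : V | ∃ h : x ≠ v, Reach col' a b w₀ ⟨x, h⟩},
        ⟨w₀.1, w₀.2, Relation.ReflTransGen.refl⟩, ⟨v, fun h => h.1 rfl⟩, ?_⟩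
      rintro x ⟨hxv, hreach⟩ y hy
      by_cases hyv : y = v
      · rw [show y = v from hyv, hsym x v]
        by_cases hc : col v x = a
        · left; exact hc
        · right; exact hw₀ ⟨x, hxv⟩ hreach hc
      · have hnr : ¬ Reach col' a b w₀ ⟨y, hyv⟩ := fun h => hy ⟨hyv, h⟩
        have hxy : x ≠ y := by
          rintro rfl
          exact hy ⟨hxv, hreach⟩
        have hnr' : ¬ Reach col' a b ⟨x, hxv⟩ ⟨y, hyv⟩ := fun h => hnr (hreach.trans h)
        have hne' : (⟨x, hxv⟩ : V') ≠ ⟨y, hyv⟩ := fun h => hxy (congrArg Subtype.val h)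
        exact cross_col (col := col') hnr' hne'

end GallaiAux

/-- Gallai's theorem: an edge-colored complete graph with no rainbow triangle
admits a partition of its vertex set into (at least two, when $|V| ≥ 2$)
parts such that all edges between two fixed parts get one color, and at most
two colors appear between parts in total. -/
theorem gallai_partition
    {V : Type*} [Fintype V] (col : V → V → ℕ)
    (hsym : ∀ u v, col u v = col v u)
    (hno : ¬ ∃ x y z : V, x ≠ y ∧ y ≠ z ∧ x ≠ z ∧
        col x y ≠ col y z ∧ col y z ≠ col x z ∧ col x y ≠ col x z) :
    ∃ (k : ℕ) (p : V → Fin k), Function.Surjective p ∧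
      (2 ≤ Fintype.card V → 2 ≤ k) ∧
      (∀ i j : Fin k, i ≠ j → ∃ a : ℕ, ∀ u v : V, p u = i → p v = j → col u v = a) ∧
      (∃ a b : ℕ, ∀ u v : V, p u ≠ p v → col u v = a ∨ col u v = b) := by
  classical
  by_cases hcard : 2 ≤ Fintype.card V
  · obtain ⟨e, d, S, hS1, hS2, hScl⟩ :=
      GallaiAux.disc (Fintype.card V) V col hsym hno hcard rfl
    have requiv : Equivalence (GallaiAux.Reach col e d) :=
      ⟨fun _ => Relation.ReflTransGen.refl,
       fun h => GallaiAux.reach_symm hsym h,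
       fun h h' => h.trans h'⟩
    let s : Setoid V := ⟨GallaiAux.Reach col e d, requiv⟩
    letI : Fintype (Quotient s) := Quotient.fintype s
    let eqv := Fintype.equivFin (Quotient s)
    have hqsurj : Function.Surjective (Quotient.mk s) := fun q => q.exists_rep
    have hpsurj : Function.Surjective (fun x => eqv (Quotient.mk s x)) :=
      eqv.surjective.comp hqsurj
    refine ⟨Fintype.card (Quotient s), fun x => eqv (Quotient.mk s x),
      hpsurj, ?_, ?_, e, d, ?_⟩
    · intro _
      obtain ⟨x, hx⟩ := hS1
      obtain ⟨y, hy⟩ := hS2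
      have hne : Quotient.mk s x ≠ Quotient.mk s y := fun h =>
        hy (GallaiAux.reach_mem hScl hx (Quotient.exact h))
      exact Fintype.one_lt_card_iff_nontrivial.mpr ⟨⟨_, _, hne⟩⟩
    · intro i j hij
      obtain ⟨u₀, hu₀⟩ := hpsurj i
      obtain ⟨v₀, hv₀⟩ := hpsurj j
      refine ⟨col u₀ v₀, ?_⟩
      intro u v hu hv
      have huu : GallaiAux.Reach col e d u₀ u :=
        Quotient.exact (eqv.injective (hu₀.trans hu.symm))
      have hvv : GallaiAux.Reach col e d v₀ v :=
        Quotient.exact (eqv.injective (hv₀.trans hv.symm))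
      have h0 : ¬ GallaiAux.Reach col e d u₀ v₀ := fun h => by
        apply hij
        rw [← hu₀, ← hv₀]
        exact congrArg eqv (Quotient.sound h)
      exact GallaiAux.mono hsym hno h0 huu hvv
    · intro u v huv
      have hne : u ≠ v := fun h => huv (by rw [h])
      have hnr : ¬ GallaiAux.Reach col e d u v := fun h =>
        huv (congrArg eqv (Quotient.sound h))
      exact GallaiAux.cross_col hnr hne
  · refine ⟨Fintype.card V, Fintype.equivFin V, (Fintype.equivFin V).surjective,
      fun h => absurd h hcard, ?_, 0, 0, ?_⟩
    · intro i j hij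
      refine ⟨0, fun u v hu hv => ?_⟩
      exfalso
      have huv : u = v := Fintype.card_le_one_iff.mp (by omega) u v
      exact hij (by rw [← hu, ← hv, huv])
    · intro u v huv
      exfalso
      have huv' : u = v := Fintype.card_le_one_iff.mp (by omega) u v
      exact huv (by rw [huv'])
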